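/- Suppose (Ш, →, ↠, ↪) is a two-acyclic factorization system and let [(X₁,Y₁),(X₂,Y₂)] be an interval in Pairs(→). Let →' be the restriction of → to X₂ ∩ Y₁ and let (↠', ↪') = Fact(→'). Then (X₂ ∩ Y₁, →', ↠', ↪') is a two-acyclic factorization system, and the map (U,V) ↦ (U ∩ Y₁, V ∩ X₂) is an order isomorphism from the interval [(X₁,Y₁),(X₂,Y₂)] to Pairs(→'). -/
import Mathlib


namespace SDL

variable {S : Type*} {L : Type*}

/-- `X^⊥ = {y | x ↛ y for all x ∈ X}` -/
def perpR (r : S → S → Prop) (X : Set S) : Set S := {y | ∀ x ∈ X, ¬ r x y}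

/-- `^⊥Y = {x | x ↛ y for all y ∈ Y}` -/
def perpL (r : S → S → Prop) (Y : Set S) : Set S := {x | ∀ y ∈ Y, ¬ r x y}

/-- `(X, Y)` is a maximal orthogonal pair for `r`. -/
def IsMOP (r : S → S → Prop) (X Y : Set S) : Prop := Y = perpR r X ∧ X = perpL r Y

/-- The set of maximal orthogonal pairs. -/
def Pairs (r : S → S → Prop) : Type _ := {p : Set S × Set S // IsMOP r p.1 p.2}

/-- `Pairs r` is ordered by containment in the first component. -/
instance (r : S → S → Prop) : PartialOrder (Pairs r) where
  le p q := p.val.1 ⊆ q.val.1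
  le_refl _ := Set.Subset.rfl
  le_trans _ _ _ h h' := Set.Subset.trans h h'
  le_antisymm p q h h' := by
    apply Subtype.ext
    have h1 : p.val.1 = q.val.1 := subset_antisymm h h'
    have h2 : p.val.2 = q.val.2 := by rw [p.prop.1, q.prop.1, h1]
    exact Prod.ext h1 h2

/-- `x ↠ y` iff for all `z`, `y → z` implies `x → z`. -/
def Onto (r : S → S → Prop) (x y : S) : Prop := ∀ z, r y z → r x z

/-- `x ↪ y` iff for all `z`, `z → x` implies `z → y`. -/
def Into (r : S → S → Prop) (x y : S) : Prop := ∀ z, r z x → r z y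

/-- `Mult ↠ ↪` relates `x` to `z` iff `x ↠ y ↪ z` for some `y`. -/
def Mult (ont inj : S → S → Prop) (x z : S) : Prop := ∃ y, ont x y ∧ inj y z

/-- `(S, r, ont, inj)` is a factorization system. -/
structure IsFactSystem (r ont inj : S → S → Prop) : Prop where
  refl : ∀ x, r x x
  onto_iff : ∀ x y, ont x y ↔ Onto r x y
  into_iff : ∀ x y, inj x y ↔ Into r x y
  mult_iff : ∀ x z, r x z ↔ Mult ont inj x z

/-- A two-acyclic factorization system. -/
structure IsTwoAcyclicFS (r ont inj : S → S → Prop) extends IsFactSystem r ont inj : Prop where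
  onto_antisymm : ∀ x y, ont x y → ont y x → x = y
  into_antisymm : ∀ x y, inj x y → inj y x → x = y
  brick : ∀ x y, ont x y → inj y x → x = y

/-- `T(x) = {x' | x ↠ x'}`. -/
def Tset (ont : S → S → Prop) (x : S) : Set S := {x' | ont x x'}

/-- `F(x) = {x' | x' ↪ x}`. -/
def Fset (inj : S → S → Prop) (x : S) : Set S := {x' | inj x' x}

/-- Restriction of a relation to a subset. -/
def restrictRel (r : S → S → Prop) (D : Set S) : D → D → Prop := fun a b => r a b

/-- A subset is closed if it equals its closure `^⊥(X^⊥)`. -/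
def IsClosedSet (r : S → S → Prop) (X : Set S) : Prop := perpL r (perpR r X) = X

/-- The lattice of closed sets, ordered by containment. -/
abbrev Closeds (r : S → S → Prop) : Type _ := {X : Set S // IsClosedSet r X}

/-- `Del(X, c) = X \ {x ∈ X : x ↠ c}`. -/
def Del (ont : S → S → Prop) (X : Set S) (c : S) : Set S := X \ {x | ont x c}

/-- `Cov(X)`: those `c ∈ X` with `Del(X,c)` closed and the closure of `Del(X,c) ∪ {c}` equal
to `X`. -/
def CovS (r ont : S → S → Prop) (X : Set S) : Set S :=
  {c | c ∈ X ∧ IsClosedSet r (Del ont X c) ∧ perpL r (perpR r (Del ont X c ∪ {c})) = X}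

/-- Direct forcing: `x ⇝ y` iff `x` is `↠`-minimal in `F(y)` or `↪`-maximal in `T(y)`. -/
def Forces (ont inj : S → S → Prop) (x y : S) : Prop :=
  (inj x y ∧ ∀ x', inj x' y → ont x x' → x' = x) ∨
  (ont y x ∧ ∀ x', ont y x' → inj x' x → x' = x)

/-- `down X` for a partial order given as a relation (`r x y` meaning `x ≥ y`). -/
def dnRel (r : S → S → Prop) (X : Set S) : Set S := {y | ∃ x ∈ X, r x y}

/-- `up X` for a partial order given as a relation (`r x y` meaning `x ≥ y`). -/
def upRel (r : S → S → Prop) (X : Set S) : Set S := {y | ∃ x ∈ X, r y x}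

section OrderNotions

variable [PartialOrder L]

/-- Completely join-irreducible: there is `j⁎` such that `x < j ↔ x ≤ j⁎`. -/
def CJIrr (j : L) : Prop := ∃ j', ∀ x : L, x < j ↔ x ≤ j'

/-- Completely meet-irreducible: there is `j^*` such that `x > m ↔ x ≥ m^*`. -/
def CMIrr (m : L) : Prop := ∃ m', ∀ x : L, m < x ↔ m' ≤ x

/-- `k = κ(j)`: `k` is the greatest element of `{y | j ⊓ y = j⁎}`. -/
def IsKappa (j k : L) : Prop :=
  ∃ j', (∀ x : L, x < j ↔ x ≤ j') ∧ IsGreatest {y : L | IsGLB ({j, y} : Set L) j'} k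

/-- `k = κᵈ(m)`: `k` is the least element of `{x | m ⊔ x = m^*}`. -/
def IsKappad (m k : L) : Prop :=
  ∃ m', (∀ x : L, m < x ↔ m' ≤ x) ∧ IsLeast {x : L | IsLUB ({m, x} : Set L) m'} k

/-- `L` is a κ-lattice: complete, meet and join generated by irreducibles, with inverse
bijections `κ` and `κᵈ` between the completely join- and meet-irreducibles. -/
def IsKappaLattice (L : Type*) [PartialOrder L] : Prop :=
  (∀ s : Set L, ∃ a, IsLUB s a) ∧
  (∀ s : Set L, ∃ a, IsGLB s a) ∧
  (∀ x : L, IsLUB {j : L | CJIrr j ∧ j ≤ x} x) ∧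
  (∀ x : L, IsGLB {m : L | CMIrr m ∧ x ≤ m} x) ∧
  (∀ j : L, CJIrr j → ∃ k, IsKappa j k ∧ CMIrr k ∧ IsKappad k j) ∧
  (∀ m : L, CMIrr m → ∃ k, IsKappad m k ∧ CJIrr k ∧ IsKappa k m)

/-- Well separated: `z₁ ≰ z₂` implies some completely join-irreducible `j` has `j ≤ z₁` and
`κ(j) ≥ z₂`. -/
def WellSeparated (L : Type*) [PartialOrder L] : Prop :=
  ∀ z₁ z₂ : L, ¬ z₁ ≤ z₂ → ∃ j k : L, CJIrr j ∧ IsKappa j k ∧ j ≤ z₁ ∧ z₂ ≤ k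

/-- The set of completely join-irreducible elements, as a type. -/
abbrev JIrrC (L : Type*) [PartialOrder L] : Type _ := {j : L // CJIrr j}

/-- `i →_L j` iff `i ≰ κ(j)`. -/
def toL (i j : JIrrC L) : Prop := ∃ k : L, IsKappa (j : L) k ∧ ¬ (i : L) ≤ k

/-- `i ↠_L j` iff `i ≥ j` in `L`. -/
def ontoL (i j : JIrrC L) : Prop := (j : L) ≤ (i : L)

/-- `i ↪_L j` iff `κ(i) ≥ κ(j)` in `L`. -/
def intoL (i j : JIrrC L) : Prop :=
  ∃ ki kj : L, IsKappa (i : L) ki ∧ IsKappa (j : L) kj ∧ kj ≤ ki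

/-- A poset is a semidistributive lattice (order-theoretically): binary joins and meets exist,
and both semidistributive laws hold. -/
def IsSDLattice (L : Type*) [PartialOrder L] : Prop :=
  (∀ x y : L, ∃ s, IsLUB ({x, y} : Set L) s) ∧
  (∀ x y : L, ∃ s, IsGLB ({x, y} : Set L) s) ∧
  (∀ x y z sxy sxz myz : L, IsLUB ({x, y} : Set L) sxy → IsLUB ({x, z} : Set L) sxz →
    sxy = sxz → IsGLB ({y, z} : Set L) myz → IsLUB ({x, myz} : Set L) sxy) ∧
  (∀ x y z mxy mxz syz : L, IsGLB ({x, y} : Set L) mxy → IsGLB ({x, z} : Set L) mxz →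
    mxy = mxz → IsLUB ({y, z} : Set L) syz → IsGLB ({x, syz} : Set L) mxy)

/-- `s` is the canonical join representation of `x`. -/
def IsCanonicalJoinRep (s : Set L) (x : L) : Prop :=
  IsLUB s x ∧ (∀ s' : Set L, IsLUB s' x → ∀ a ∈ s, ∃ b ∈ s', a ≤ b) ∧
  IsAntichain (· ≤ ·) s

end OrderNotions

/-- Join semidistributivity. -/
def JoinSD (L : Type*) [Lattice L] : Prop :=
  ∀ x y z : L, x ⊔ y = x ⊔ z → x ⊔ (y ⊓ z) = x ⊔ y

/-- Meet semidistributivity. -/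
def MeetSD (L : Type*) [Lattice L] : Prop :=
  ∀ x y z : L, x ⊓ y = x ⊓ z → x ⊓ (y ⊔ z) = x ⊓ y

/-- Complete join semidistributivity. -/
def CompletelyJoinSD (L : Type*) [CompleteLattice L] : Prop :=
  ∀ (X : Set L) (y z : L), X.Nonempty → (∀ x ∈ X, x ⊔ y = z) → sInf X ⊔ y = z

/-- Complete meet semidistributivity. -/
def CompletelyMeetSD (L : Type*) [CompleteLattice L] : Prop :=
  ∀ (X : Set L) (y z : L), X.Nonempty → (∀ x ∈ X, x ⊓ y = z) → sSup X ⊓ y = z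

end SDL

namespace SDL

section IntervalAux

variable {S : Type*} {r ont inj : S → S → Prop}

lemma r_of_ont (h : IsFactSystem r ont inj) {x w : S} (hw : ont x w) : r x w :=
  (h.onto_iff x w).1 hw w (h.refl w)

lemma r_of_inj (h : IsFactSystem r ont inj) {w z : S} (hw : inj w z) : r w z :=
  (h.into_iff w z).1 hw w (h.refl w)

lemma ont_trans' (h : IsFactSystem r ont inj) {x y z : S} (h1 : ont x y) (h2 : ont y z) :
    ont x z :=
  (h.onto_iff x z).2 fun c hc => (h.onto_iff x y).1 h1 c ((h.onto_iff y z).1 h2 c hc)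

lemma inj_trans' (h : IsFactSystem r ont inj) {x y z : S} (h1 : inj x y) (h2 : inj y z) :
    inj x z :=
  (h.into_iff x z).2 fun c hc => (h.into_iff y z).1 h2 c ((h.into_iff x y).1 h1 c hc)

lemma eq_of_r_inj (h : IsTwoAcyclicFS r ont inj) {x c : S} (hrc : r x c) (hcx : inj c x) :
    c = x := by
  obtain ⟨d, hxd, hdc⟩ := (h.mult_iff x c).1 hrc
  have hdx : inj d x := inj_trans' h.toIsFactSystem hdc hcx
  have hd : x = d := h.brick x d hxd hdx
  subst hd
  exact (h.into_antisymm x c hdc hcx).symm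

lemma eq_of_r_ont (h : IsTwoAcyclicFS r ont inj) {a x : S} (hra : r a x) (hxa : ont x a) :
    a = x := by
  obtain ⟨b, hab, hbx⟩ := (h.mult_iff a x).1 hra
  have hxb : ont x b := ont_trans' h.toIsFactSystem hxa hab
  have hb : x = b := h.brick x b hxb hbx
  subst hb
  exact h.onto_antisymm a x hab hxa

lemma not_r_pair (p : Pairs r) {x y : S} (hx : x ∈ p.val.1) (hy : y ∈ p.val.2) : ¬ r x y := by
  rw [p.prop.1] at hy; exact hy x hx

lemma mem_fst_of_ont (h : IsFactSystem r ont inj) (p : Pairs r) {x w : S}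
    (hx : x ∈ p.val.1) (hw : ont x w) : w ∈ p.val.1 := by
  rw [p.prop.2]
  intro b hb hr
  exact not_r_pair p hx hb ((h.onto_iff x w).1 hw b hr)

lemma mem_snd_of_inj (h : IsFactSystem r ont inj) (p : Pairs r) {z w : S}
    (hz : z ∈ p.val.2) (hw : inj w z) : w ∈ p.val.2 := by
  rw [p.prop.1]
  intro a ha hr
  exact not_r_pair p ha hz ((h.into_iff w z).1 hw a hr)

lemma factor_mem (h : IsFactSystem r ont inj) (p₁ p₂ : Pairs r) {x z : S}
    (hx : x ∈ p₂.val.1) (hz : z ∈ p₁.val.2) (hr : r x z) :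
    ∃ w, (w ∈ p₂.val.1 ∩ p₁.val.2) ∧ ont x w ∧ inj w z := by
  obtain ⟨w, hxw, hwz⟩ := (h.mult_iff x z).1 hr
  exact ⟨w, ⟨mem_fst_of_ont h p₂ hx hxw, mem_snd_of_inj h p₁ hz hwz⟩, hxw, hwz⟩

lemma subset_perpL_perpR (r : S → S → Prop) (W : Set S) : W ⊆ perpL r (perpR r W) :=
  fun w hw b hb => hb w hw

lemma subset_perpR_perpL (r : S → S → Prop) (W : Set S) : W ⊆ perpR r (perpL r W) :=
  fun w hw a ha => ha w hw

lemma perpR_anti (r : S → S → Prop) {W W' : Set S} (h : W ⊆ W') : perpR r W' ⊆ perpR r W :=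
  fun b hb x hx => hb x (h hx)

lemma perpR_perpL_perpR (r : S → S → Prop) (W : Set S) :
    perpR r (perpL r (perpR r W)) = perpR r W :=
  Set.Subset.antisymm (perpR_anti r (subset_perpL_perpR r W)) (subset_perpR_perpL r (perpR r W))

lemma pairs_ext {p q : Pairs r} (h1 : p.val.1 = q.val.1) : p = q :=
  Subtype.ext (Prod.ext h1 (by rw [p.prop.1, q.prop.1, h1]))

lemma snd_subset {p₁ : Pairs r} {q : Pairs r} (hq1 : p₁ ≤ q) : q.val.2 ⊆ p₁.val.2 := by
  rw [q.prop.1, p₁.prop.1]; exact perpR_anti r hq1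

lemma fwd_mop (h : IsFactSystem r ont inj) {p₁ p₂ : Pairs r} {q : Pairs r}
    (h1 : p₁ ≤ q) (h2 : q ≤ p₂) :
    IsMOP (restrictRel r (p₂.val.1 ∩ p₁.val.2))
      {d : (p₂.val.1 ∩ p₁.val.2 : Set S) | (d : S) ∈ q.val.1}
      {d : (p₂.val.1 ∩ p₁.val.2 : Set S) | (d : S) ∈ q.val.2} := by
  constructor
  · apply Set.Subset.antisymm
    · intro d hd e he hre
      exact not_r_pair q he hd hre
    · intro d hd
      show (d : S) ∈ q.val.2
      rw [q.prop.1]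
      intro u hu hr
      obtain ⟨w, hwD, huw, hwd⟩ := factor_mem h p₁ p₂ (h2 hu) d.prop.2 hr
      have hwq : w ∈ q.val.1 := mem_fst_of_ont h q hu huw
      exact hd ⟨w, hwD⟩ hwq (r_of_inj h hwd)
  · apply Set.Subset.antisymm
    · intro d hd e he hre
      exact not_r_pair q hd he hre
    · intro d hd
      show (d : S) ∈ q.val.1
      rw [q.prop.2]
      intro v hv hr
      obtain ⟨w, hwD, hdw, hwv⟩ := factor_mem h p₁ p₂ d.prop.1 (snd_subset h1 hv) hr
      have hwq : w ∈ q.val.2 := mem_snd_of_inj h q hv hwv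
      exact hd ⟨w, hwD⟩ hwq (r_of_ont h hdw)

end IntervalAux

/-- Theorem 4.3: an interval `[(X₁,Y₁), (X₂,Y₂)]` of `Pairs(→)` is isomorphic to the lattice
of maximal orthogonal pairs of the restriction of `→` to `X₂ ∩ Y₁`, which is again a
two-acyclic factorization system. -/
theorem interval_fact_system (S : Type u) (r ont inj : S → S → Prop)
    (h : IsTwoAcyclicFS r ont inj) (p₁ p₂ : Pairs r) (h12 : p₁ ≤ p₂) :
    IsTwoAcyclicFS (restrictRel r (p₂.val.1 ∩ p₁.val.2))
      (Onto (restrictRel r (p₂.val.1 ∩ p₁.val.2)))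
      (Into (restrictRel r (p₂.val.1 ∩ p₁.val.2))) ∧
    ∃ e : (Set.Icc p₁ p₂) ≃o Pairs (restrictRel r (p₂.val.1 ∩ p₁.val.2)),
      ∀ q : Set.Icc p₁ p₂,
        (e q).val.1 = {d : (p₂.val.1 ∩ p₁.val.2 : Set S) | (d : S) ∈ (q : Pairs r).val.1} ∧
        (e q).val.2 = {d : (p₂.val.1 ∩ p₁.val.2 : Set S) | (d : S) ∈ (q : Pairs r).val.2} := by
  have hfs := h.toIsFactSystem
  constructor
  · refine ⟨⟨fun x => h.refl (x : S), fun _ _ => Iff.rfl, fun _ _ => Iff.rfl, ?_⟩, ?_, ?_, ?_⟩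
    · -- mult_iff
      intro x z
      constructor
      · intro hr
        obtain ⟨w, hwD, hxw, hwz⟩ := factor_mem hfs p₁ p₂ x.prop.1 z.prop.2 hr
        exact ⟨⟨w, hwD⟩, fun c hc => (h.onto_iff _ _).1 hxw (c : S) hc,
          fun c hc => (h.into_iff _ _).1 hwz (c : S) hc⟩
      · rintro ⟨y, hxy, hyz⟩
        exact hxy z (hyz y (h.refl (y : S)))
    · -- onto_antisymm
      intro x y hxy hyx
      have ryx : restrictRel r (p₂.val.1 ∩ p₁.val.2) y x := hyx x (h.refl (x : S))
      obtain ⟨c, hcD, hyc, hcx⟩ := factor_mem hfs p₁ p₂ y.prop.1 x.prop.2 ryx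
      have rxc : r (x : S) c := hxy ⟨c, hcD⟩ (r_of_ont hfs hyc)
      have hc : c = (x : S) := eq_of_r_inj h rxc hcx
      subst hc
      have rxy : restrictRel r (p₂.val.1 ∩ p₁.val.2) x y := hxy y (h.refl (y : S))
      obtain ⟨c', hcD', hxc', hcy'⟩ := factor_mem hfs p₁ p₂ x.prop.1 y.prop.2 rxy
      have ryc : r (y : S) c' := hyx ⟨c', hcD'⟩ (r_of_ont hfs hxc')
      have hc' : c' = (y : S) := eq_of_r_inj h ryc hcy'
      subst hc'
      exact Subtype.ext (h.onto_antisymm (x : S) (y : S) hxc' hyc)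
    · -- into_antisymm
      intro x y hxy hyx
      have rxy : restrictRel r (p₂.val.1 ∩ p₁.val.2) x y := hxy x (h.refl (x : S))
      obtain ⟨a, haD, hxa, hay⟩ := factor_mem hfs p₁ p₂ x.prop.1 y.prop.2 rxy
      have rax : r a (x : S) := hyx ⟨a, haD⟩ (r_of_inj hfs hay)
      have ha : a = (x : S) := eq_of_r_ont h rax hxa
      subst ha
      have ryx : restrictRel r (p₂.val.1 ∩ p₁.val.2) y x := hyx y (h.refl (y : S))
      obtain ⟨b, hbD, hyb, hbx⟩ := factor_mem hfs p₁ p₂ y.prop.1 x.prop.2 ryx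
      have rby : r b (y : S) := hxy ⟨b, hbD⟩ (r_of_inj hfs hbx)
      have hb : b = (y : S) := eq_of_r_ont h rby hyb
      subst hb
      exact Subtype.ext (h.into_antisymm (x : S) (y : S) hay hbx)
    · -- brick
      intro x y hO hI
      have rxy : restrictRel r (p₂.val.1 ∩ p₁.val.2) x y := hO y (h.refl (y : S))
      obtain ⟨a, haD, hxa, hay⟩ := factor_mem hfs p₁ p₂ x.prop.1 y.prop.2 rxy
      have rax : r a (x : S) := hI ⟨a, haD⟩ (r_of_inj hfs hay)
      have ha : a = (x : S) := eq_of_r_ont h rax hxa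
      subst ha
      have ryx : restrictRel r (p₂.val.1 ∩ p₁.val.2) y x := hI y (h.refl (y : S))
      obtain ⟨c, hcD, hyc, hcx⟩ := factor_mem hfs p₁ p₂ y.prop.1 x.prop.2 ryx
      have rxc : r (x : S) c := hO ⟨c, hcD⟩ (r_of_ont hfs hyc)
      have hc : c = (x : S) := eq_of_r_inj h rxc hcx
      subst hc
      exact Subtype.ext (h.brick (y : S) (x : S) hyc hay).symm
  · -- the order isomorphism
    set D : Set S := p₂.val.1 ∩ p₁.val.2 with hDdef
    set r' : D → D → Prop := restrictRel r D with hr'def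
    let f : Set.Icc p₁ p₂ → Pairs r' := fun q =>
      ⟨({d : D | (d : S) ∈ (q : Pairs r).val.1}, {d : D | (d : S) ∈ (q : Pairs r).val.2}),
        fwd_mop hfs q.prop.1 q.prop.2⟩
    let g : Pairs r' → Pairs r := fun P =>
      ⟨(perpL r (perpR r (p₁.val.1 ∪ (Subtype.val '' P.val.1))),
        perpR r (p₁.val.1 ∪ (Subtype.val '' P.val.1))),
        (perpR_perpL_perpR r _).symm, rfl⟩
    have hYsub : ∀ P : Pairs r',
        p₂.val.2 ⊆ perpR r (p₁.val.1 ∪ Subtype.val '' P.val.1) := by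
      intro P b hb x hx
      rcases hx with hx | ⟨d, _, rfl⟩
      · have hb1 : b ∈ p₁.val.2 := snd_subset h12 hb
        rw [p₁.prop.1] at hb1
        exact hb1 x hx
      · exact not_r_pair p₂ d.prop.1 hb
    have hg1 : ∀ P : Pairs r', p₁ ≤ g P := by
      intro P x hx b hb
      exact hb x (Or.inl hx)
    have hg2 : ∀ P : Pairs r', g P ≤ p₂ := by
      intro P u hu
      rw [p₂.prop.2]
      intro b hb
      exact hu b (hYsub P hb)
    have hBV : ∀ P : Pairs r',
        Subtype.val '' P.val.2 ⊆ perpR r (p₁.val.1 ∪ Subtype.val '' P.val.1) := by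
      rintro P _ ⟨e, he, rfl⟩ x hx
      rcases hx with hx | ⟨d, hd, rfl⟩
      · have h1 : (e : S) ∈ p₁.val.2 := e.prop.2
        rw [p₁.prop.1] at h1
        exact h1 x hx
      · rw [P.prop.1] at he
        exact he d hd
    have hfg : ∀ P : Pairs r', {d : D | (d : S) ∈ (g P).val.1} = P.val.1 := by
      intro P
      apply Set.Subset.antisymm
      · intro d hd
        show d ∈ P.val.1
        rw [P.prop.2]
        intro e he hre
        exact hd (e : S) (hBV P ⟨e, he, rfl⟩) hre
      · intro d hd b hb hr
        have hbY1 : b ∈ p₁.val.2 := by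
          rw [p₁.prop.1]
          intro x hx
          exact hb x (Or.inl hx)
        obtain ⟨w, hwD, hdw, hwb⟩ := factor_mem hfs p₁ p₂ d.prop.1 hbY1 hr
        have hwA : (⟨w, hwD⟩ : D) ∈ P.val.1 := by
          rw [P.prop.2]
          intro e he hre
          have hde : r (d : S) (e : S) := (h.onto_iff _ _).1 hdw (e : S) hre
          rw [P.prop.1] at he
          exact he d hd hde
        exact hb w (Or.inr ⟨⟨w, hwD⟩, hwA, rfl⟩) (r_of_inj hfs hwb)
    have hmono_rev : ∀ q q' : Set.Icc p₁ p₂, f q ≤ f q' →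
        (q : Pairs r) ≤ (q' : Pairs r) := by
      intro q q' hle u hu
      have hq'2 := (q' : Pairs r).prop.2
      rw [hq'2]
      intro b hb hr
      have hbY1 : b ∈ p₁.val.2 := snd_subset q'.prop.1 hb
      obtain ⟨w, hwD, huw, hwb⟩ := factor_mem hfs p₁ p₂ (q.prop.2 hu) hbY1 hr
      have hwq : w ∈ (q : Pairs r).val.1 := mem_fst_of_ont hfs _ hu huw
      have hwq' : (⟨w, hwD⟩ : D) ∈ (f q').val.1 := hle hwq
      exact not_r_pair (q' : Pairs r) hwq' hb (r_of_inj hfs hwb)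
    let g' : Pairs r' → Set.Icc p₁ p₂ := fun P => ⟨g P, hg1 P, hg2 P⟩
    have hright : ∀ P : Pairs r', f (g' P) = P := fun P => pairs_ext (hfg P)
    have hinj : Function.Injective f := by
      intro q q' hqq'
      have l1 := hmono_rev q q' (le_of_eq hqq')
      have l2 := hmono_rev q' q (le_of_eq hqq'.symm)
      exact Subtype.ext (le_antisymm l1 l2)
    have hleft : ∀ q : Set.Icc p₁ p₂, g' (f q) = q := fun q => hinj (hright (f q))
    refine ⟨⟨⟨f, g', hleft, hright⟩, ?_⟩, fun q => ⟨rfl, rfl⟩⟩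
    intro q q'
    constructor
    · intro hle
      exact Subtype.coe_le_coe.1 (hmono_rev q q' hle)
    · intro hle d hd
      exact (Subtype.coe_le_coe.2 hle : (q : Pairs r) ≤ (q' : Pairs r)) hd

end SDL
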